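/- Let A and B be finite types and let ψ₀, ψ₁ : A × B → ℂ be unit vectors. If their partial traces over A are equal, ptrA ψ₀ = ptrA ψ₁, then there exists a unitary matrix S ∈ Matrix.unitaryGroup A ℂ such that (S ⊗ I).mulVec ψ₀ = ψ₁. (Gisin–Hughston–Jozsa–Wootters theorem: any two purifications, over the same auxiliary system A, of the same density matrix on B are related by a unitary acting on A alone.) -/

import Mathlib

open scoped ComplexOrder InnerProductSpace
open Matrix

noncomputable section

/-- Partial trace over `A` of the outer product `|ψ⟩⟨ψ|`:
`(ptrA ψ) j q = ∑ i, ψ (i, j) * conj (ψ (i, q))`. -/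
def ptrA {A B : Type*} [Fintype A] (ψ : A × B → ℂ) : Matrix B B ℂ :=
  fun j q => ∑ i : A, ψ (i, j) * (starRingEnd ℂ) (ψ (i, q))

/-- The Kronecker product `S ⊗ I` with the identity on `B`, as a matrix on `A × B`. -/
def kronId {A B : Type*} [DecidableEq B] (S : Matrix A A ℂ) : Matrix (A × B) (A × B) ℂ :=
  Matrix.kroneckerMap (· * ·) S (1 : Matrix B B ℂ)

/-- `ptrA ψ` is a Gram matrix, hence positive semidefinite. -/
lemma ptrA_posSemidef {A B : Type*} [Fintype A] [Fintype B] (ψ : A × B → ℂ) :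
    (ptrA ψ).PosSemidef := by
  set V : Matrix A B ℂ := Matrix.of fun i j => (starRingEnd ℂ) (ψ (i, j)) with hV
  have h := Matrix.posSemidef_conjTranspose_mul_self V
  have heq : ptrA ψ = Vᴴ * V := by
    ext j q
    simp [Matrix.mul_apply, Matrix.conjTranspose_apply, ptrA, hV, mul_comm]
  rw [heq]; exact h

namespace Matrix.PosSemidef

/-- The square root of a positive semidefinite matrix, as `Matrix.PosSemidef.sqrt` was
defined in Mathlib of December 2024 (since removed). -/
noncomputable def sqrt {n 𝕜 : Type*} [Fintype n] [RCLike 𝕜] [DecidableEq n]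
    {A : Matrix n n 𝕜} (hA : A.PosSemidef) : Matrix n n 𝕜 :=
  hA.1.eigenvectorUnitary.1 * diagonal ((↑) ∘ Real.sqrt ∘ hA.1.eigenvalues) *
  (star hA.1.eigenvectorUnitary : Matrix n n 𝕜)

lemma posSemidef_sqrt {n 𝕜 : Type*} [Fintype n] [RCLike 𝕜] [DecidableEq n]
    {A : Matrix n n 𝕜} (hA : A.PosSemidef) : PosSemidef hA.sqrt := by
  have hD : (diagonal ((↑) ∘ Real.sqrt ∘ hA.1.eigenvalues) : Matrix n n 𝕜).PosSemidef := by
    refine posSemidef_diagonal_iff.mpr fun i => ?_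
    rw [Function.comp_apply, RCLike.nonneg_iff]
    constructor
    · simp only [RCLike.ofReal_re]; exact Real.sqrt_nonneg _
    · simp only [RCLike.ofReal_im]
  convert hD.mul_mul_conjTranspose_same (hA.1.eigenvectorUnitary : Matrix n n 𝕜) using 1
  simp [sqrt, Matrix.star_eq_conjTranspose]

end Matrix.PosSemidef

lemma sqrt_mul_mul_sqrt_posSemidef {B : Type*} [Fintype B] [DecidableEq B]
    {ρ σ : Matrix B B ℂ} (hρ : ρ.PosSemidef) (hσ : σ.PosSemidef) :
    (hρ.sqrt * σ * hρ.sqrt).PosSemidef := by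
  have h := hσ.mul_mul_conjTranspose_same hρ.sqrt
  rwa [hρ.posSemidef_sqrt.isHermitian.eq] at h

/-- The fidelity `F(ρ, σ) = tr √(√ρ * σ * √ρ)` of two positive semidefinite matrices. -/
def fidelity {B : Type*} [Fintype B] [DecidableEq B] {ρ σ : Matrix B B ℂ}
    (hρ : ρ.PosSemidef) (hσ : σ.PosSemidef) : ℝ :=
  ((sqrt_mul_mul_sqrt_posSemidef hρ hσ).sqrt.trace).re


lemma toEuclideanLin_mul' {l m n : Type*} [Fintype l] [Fintype m] [Fintype n]
    [DecidableEq l] [DecidableEq m] (M : Matrix n m ℂ) (N : Matrix m l ℂ) :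
    Matrix.toEuclideanLin (M * N) =
      (Matrix.toEuclideanLin M).comp (Matrix.toEuclideanLin N) := by
  simp only [Matrix.toEuclideanLin_eq_toLin]
  exact Matrix.toLin_mul _ _ _ M N

lemma gram_key {A B : Type*} [Fintype A] [Fintype B] [DecidableEq A] [DecidableEq B]
    (M : Matrix A B ℂ) (x y : EuclideanSpace ℂ B) :
    ⟪Matrix.toEuclideanLin M x, Matrix.toEuclideanLin M y⟫_ℂ
      = ⟪x, Matrix.toEuclideanLin (Mᴴ * M) y⟫_ℂ := by
  rw [toEuclideanLin_mul', LinearMap.comp_apply,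
    Matrix.toEuclideanLin_conjTranspose_eq_adjoint, LinearMap.adjoint_inner_right]

set_option maxHeartbeats 1000000 in
/-- If two complex matrices have the same Gram matrix, they are related by a unitary. -/
lemma exists_unitary_mul_eq {A B : Type*} [Fintype A] [Fintype B] [DecidableEq A] [DecidableEq B]
    (M₀ M₁ : Matrix A B ℂ) (hMM : M₀ᴴ * M₀ = M₁ᴴ * M₁) :
    ∃ S ∈ Matrix.unitaryGroup A ℂ, S * M₀ = M₁ := by
  classical
  set T₀ := Matrix.toEuclideanLin M₀ with hT₀
  set T₁ := Matrix.toEuclideanLin M₁ with hT₁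
  have hinner : ∀ x y : EuclideanSpace ℂ B, ⟪T₀ x, T₀ y⟫_ℂ = ⟪T₁ x, T₁ y⟫_ℂ := by
    intro x y
    rw [hT₀, hT₁, gram_key, gram_key, hMM]
  have hnorm : ∀ x : EuclideanSpace ℂ B, ‖T₀ x‖ = ‖T₁ x‖ := by
    intro x
    rw [@norm_eq_sqrt_re_inner ℂ, @norm_eq_sqrt_re_inner ℂ, hinner x x]
  have hker : LinearMap.ker T₀ ≤ LinearMap.ker T₁ := by
    intro x hx
    rw [LinearMap.mem_ker] at hx ⊢
    have := hnorm x
    rw [hx, norm_zero] at this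
    exact norm_eq_zero.mp this.symm
  set f : ↥(LinearMap.range T₀) →ₗ[ℂ] EuclideanSpace ℂ A :=
    ((LinearMap.ker T₀).liftQ T₁ hker).comp T₀.quotKerEquivRange.symm.toLinearMap with hfdef
  have hf : ∀ (x : EuclideanSpace ℂ B) (hx : T₀ x ∈ LinearMap.range T₀),
      f ⟨T₀ x, hx⟩ = T₁ x := by
    intro x hx
    simp [hfdef, LinearMap.quotKerEquivRange_symm_apply_image]
  have hfnorm : ∀ v : ↥(LinearMap.range T₀), ‖f v‖ = ‖v‖ := by
    rintro ⟨v, hv⟩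
    obtain ⟨x, rfl⟩ := hv
    rw [hf x (LinearMap.mem_range_self _ x)]
    exact (hnorm x).symm
  set L : ↥(LinearMap.range T₀) →ₗᵢ[ℂ] EuclideanSpace ℂ A := ⟨f, hfnorm⟩ with hLdef
  set U := L.extend with hUdef
  obtain ⟨S, hS⟩ : ∃ S : Matrix A A ℂ, Matrix.toEuclideanLin S = U.toLinearMap :=
    ⟨Matrix.toEuclideanLin.symm U.toLinearMap, Matrix.toEuclideanLin.apply_symm_apply _⟩
  have hUx : ∀ x, U x = Matrix.toEuclideanLin S x := by
    intro x; rw [hS]; rfl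
  have hSM : S * M₀ = M₁ := by
    apply Matrix.toEuclideanLin.injective
    rw [toEuclideanLin_mul', hS]
    refine LinearMap.ext fun x => ?_
    show U (T₀ x) = T₁ x
    have h1 := L.extend_apply ⟨T₀ x, LinearMap.mem_range_self _ x⟩
    have h2 : L ⟨T₀ x, LinearMap.mem_range_self _ x⟩ = T₁ x :=
      hf x (LinearMap.mem_range_self _ x)
    rw [hUdef]
    exact h1.trans h2
  refine ⟨S, Matrix.mem_unitaryGroup_iff'.2 ?_, hSM⟩
  ext j k
  have h1 := U.inner_map_map ((WithLp.equiv 2 (A → ℂ)).symm (Pi.single j 1))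
    ((WithLp.equiv 2 (A → ℂ)).symm (Pi.single k 1))
  rw [hUx, hUx, WithLp.equiv_symm_apply, Matrix.toEuclideanLin_apply_piLp_toLp,
    Matrix.toEuclideanLin_apply_piLp_toLp,
    EuclideanSpace.inner_toLp_toLp, EuclideanSpace.inner_toLp_toLp, dotProduct_comm,
    dotProduct_comm (Pi.single k 1)] at h1
  simp only [Matrix.mulVec_single_one, mul_one] at h1
  calc (star S * S) j k
      = dotProduct (star fun i => S i j) (fun i => S i k) := by
        simp [Matrix.mul_apply, dotProduct, Matrix.star_apply, mul_comm]
    _ = dotProduct (star (Pi.single j 1)) (Pi.single k 1) := h1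
    _ = (1 : Matrix A A ℂ) j k := by
        simp [dotProduct, Pi.single_apply, Matrix.one_apply, eq_comm]

/-- **Gisin–Hughston–Jozsa–Wootters theorem.** Any two purifications over the same
auxiliary system `A` of the same density matrix on `B` are related by a unitary
acting on `A` alone. -/
theorem ghjw_purifications_related_by_local_unitary
    {A B : Type*} [Fintype A] [Fintype B] [DecidableEq A] [DecidableEq B]
    (ψ₀ ψ₁ : A × B → ℂ)
    (h₀ : ∑ k : A × B, (starRingEnd ℂ) (ψ₀ k) * ψ₀ k = 1)
    (h₁ : ∑ k : A × B, (starRingEnd ℂ) (ψ₁ k) * ψ₁ k = 1)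
    (h : ptrA ψ₀ = ptrA ψ₁) :
    ∃ S ∈ Matrix.unitaryGroup A ℂ, (kronId S).mulVec ψ₀ = ψ₁ := by
  classical
  set M₀ : Matrix A B ℂ := Matrix.of fun i j => ψ₀ (i, j) with hM₀
  set M₁ : Matrix A B ℂ := Matrix.of fun i j => ψ₁ (i, j) with hM₁
  have hgram : M₀ᴴ * M₀ = M₁ᴴ * M₁ := by
    ext j q
    have hq := congrFun (congrFun h q) j
    simp only [ptrA] at hq
    simpa [Matrix.mul_apply, Matrix.conjTranspose_apply, hM₀, hM₁, mul_comm] using hq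
  obtain ⟨S, hSu, hSM⟩ := exists_unitary_mul_eq M₀ M₁ hgram
  refine ⟨S, hSu, ?_⟩
  funext k
  obtain ⟨i, j⟩ := k
  have hij := congrFun (congrFun hSM i) j
  simp only [Matrix.mul_apply, hM₀, hM₁, Matrix.of_apply] at hij
  rw [Matrix.mulVec]
  show (Finset.univ.sum fun x => kronId S (i, j) x * ψ₀ x) = ψ₁ (i, j)
  rw [← hij, Fintype.sum_prod_type]
  simp [kronId, Matrix.one_apply, mul_ite, ite_mul, mul_assoc]
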